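/- Let Φ be a valued constraint language over a finite domain D containing every unary cost function D → ℝ̄≥0. Suppose there are distinct a,b ∈ D and a ternary cost function g ∈ ⟨Φ⟩_v whose set of points of finite value is exactly {(a,a,a),(a,b,b),(b,a,b),(b,b,a)}. Then Φ is not weakly submodular. -/
import Mathlib


open scoped NNRat ENNReal

/-- A cost function of some arity over domain `D`, taking values in `ℝ≥0 ∪ {∞}`. -/
abbrev CFun (D : Type) : Type := Σ k : ℕ, (Fin k → D) → ℝ≥0∞

/-- The binary crisp equality cost function. -/
noncomputable def eqC (D : Type) [DecidableEq D] : (Fin 2 → D) → ℝ≥0∞ :=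
  fun x => if x 0 = x 1 then 0 else ⊤

/-- `f` is definable by a psm-formula over `Φ ∪ {eq}`: a minimisation over `k`
bound variables of a sum of `m` atomic formulas. -/
def InVClone {D : Type} [Fintype D] [DecidableEq D] (Φ : Set (CFun D)) {n : ℕ}
    (f : (Fin n → D) → ℝ≥0∞) : Prop :=
  ∃ (k m : ℕ) (ar : Fin m → ℕ) (g : ∀ j : Fin m, (Fin (ar j) → D) → ℝ≥0∞)
    (sc : ∀ j : Fin m, Fin (ar j) → Fin (n + k)),
    (∀ j : Fin m, (⟨ar j, g j⟩ : CFun D) ∈ Φ ∨ (⟨ar j, g j⟩ : CFun D) = ⟨2, eqC D⟩) ∧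
    ∀ x : Fin n → D, f x = ⨅ y : Fin k → D, ∑ j : Fin m, g j (fun i => Fin.append x y (sc j i))

/-- Weak submodularity of a valued constraint language. -/
def WeaklySubmodular {D : Type} [Fintype D] [DecidableEq D] (Φ : Set (CFun D)) : Prop :=
  ∀ f : (Fin 2 → D) → ℝ≥0∞, InVClone Φ f → ∀ a b : D,
    f ![a, a] + f ![b, b] ≤ f ![a, b] + f ![b, a] ∨ (f ![a, a] = ⊤ ∧ f ![b, b] = ⊤)

lemma append_cast_aux {D : Type} (k : ℕ) (z : Fin 2 → D) (y : Fin (k+1) → D) (i : Fin (3+k)) :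
    Fin.append z y (Fin.cast (by omega) i) = Fin.append ![z 0, z 1, y 0] (fun t => y t.succ) i := by
  rcases i with ⟨v, hv⟩
  simp only [Fin.append, Fin.addCases, Fin.cast]
  rcases Nat.lt_or_ge v 2 with h2 | h2
  · rw [dif_pos h2, dif_pos (by omega : v < 3)]
    interval_cases v <;> rfl
  · rcases Nat.lt_or_ge v 3 with h3 | h3
    · rw [dif_neg (by omega), dif_pos h3]
      have : v = 2 := by omega
      subst this; rfl
    · rw [dif_neg (by omega), dif_neg (by omega)]
      simp only [eq_rec_constant]
      apply congrArg y
      ext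
      simp [Fin.subNat]
      omega

lemma inVClone_comp {D : Type} [Fintype D] [DecidableEq D] [Nonempty D] (Φ : Set (CFun D))
    (hcons : ∀ u : D → ℝ≥0∞, (⟨1, fun x => u (x 0)⟩ : CFun D) ∈ Φ)
    (g : (Fin 3 → D) → ℝ≥0∞) (hg : InVClone Φ g) (u : D → ℝ≥0∞) :
    InVClone Φ (fun z : Fin 2 → D => ⨅ c : D, u c + g ![z 0, z 1, c]) := by
  obtain ⟨k, m, ar, gj, sc, hmem, heq⟩ := hg
  let ar' : Fin (m+1) → ℕ := Fin.cons 1 ar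
  let g' : ∀ j : Fin (m+1), (Fin (ar' j) → D) → ℝ≥0∞ :=
    Fin.cons (fun x => u (x ⟨0, Nat.one_pos⟩)) gj
  let sc' : ∀ j : Fin (m+1), Fin (ar' j) → Fin (2+(k+1)) :=
    Fin.cons (fun _ => (⟨2, by omega⟩ : Fin (2+(k+1)))) (fun j i => Fin.cast (by omega) (sc j i))
  refine ⟨k+1, m+1, ar', g', sc', ?_, ?_⟩
  · intro j
    induction j using Fin.cases with
    | zero => exact Or.inl (hcons u)
    | succ j => exact hmem j
  · intro z
    calc ⨅ c : D, u c + g ![z 0, z 1, c]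
        = ⨅ c : D, ⨅ y' : Fin k → D, u c + ∑ j : Fin m,
            gj j (fun i => Fin.append ![z 0, z 1, c] y' (sc j i)) := by
          refine iInf_congr fun c => ?_
          rw [heq ![z 0, z 1, c], ENNReal.add_iInf]
      _ = ⨅ p : D × (Fin k → D), u p.1 + ∑ j : Fin m,
            gj j (fun i => Fin.append ![z 0, z 1, p.1] p.2 (sc j i)) := by
          rw [iInf_prod]
      _ = ⨅ y : Fin (k+1) → D, u (y 0) + ∑ j : Fin m,
            gj j (fun i => Fin.append ![z 0, z 1, y 0] (fun t => y t.succ) (sc j i)) := by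
          refine Equiv.iInf_congr (Fin.consEquiv (fun _ : Fin (k+1) => D)) fun y => ?_
          rfl
      _ = ⨅ y : Fin (k+1) → D, ∑ j : Fin (m+1), g' j (fun i => Fin.append z y (sc' j i)) := by
          refine iInf_congr fun y => ?_
          rw [Fin.sum_univ_succ]
          have h0 : g' 0 (fun i => Fin.append z y (sc' 0 i)) = u (y 0) := rfl
          rw [h0]
          congr 1
          refine Finset.sum_congr rfl (fun j _ => ?_)
          show gj j _ = gj j _
          congr 1
          funext i
          exact (append_cast_aux k z y (sc j i)).symm

lemma vec3_ext {D : Type} {x y z p q r : D} (h : ![x,y,z] = ![p,q,r]) : x = p ∧ y = q ∧ z = r :=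
  ⟨congrFun h 0, congrFun h 1, congrFun h 2⟩

lemma iInf_eq_of_top {D : Type} [Fintype D] {t : D → ℝ≥0∞} (c0 : D)
    (h : ∀ c, c ≠ c0 → t c = ⊤) : ⨅ c, t c = t c0 := by
  refine le_antisymm (iInf_le _ c0) (le_iInf fun c => ?_)
  by_cases hc : c = c0
  · subst hc; exact le_rfl
  · rw [h c hc]; exact le_top


/-- If `Φ` contains every unary cost function and its valued
clone contains a ternary cost function `g` whose points of finite value are
exactly `{(a,a,a), (a,b,b), (b,a,b), (b,b,a)}` for some distinct `a, b`, then
`Φ` is not weakly submodular. -/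
theorem not_weaklySubmodular_of_ternary
    {D : Type} [Fintype D] [DecidableEq D] (hD : 2 ≤ Fintype.card D)
    (Φ : Set (CFun D))
    (hcons : ∀ u : D → ℝ≥0∞, (⟨1, fun x => u (x 0)⟩ : CFun D) ∈ Φ)
    (a b : D) (hab : a ≠ b)
    (g : (Fin 3 → D) → ℝ≥0∞) (hg : InVClone Φ g)
    (hfin : {x : Fin 3 → D | g x ≠ ⊤} =
      {![a, a, a], ![a, b, b], ![b, a, b], ![b, b, a]}) :
    ¬ WeaklySubmodular Φ := by
  have hne : Nonempty D := Fintype.card_pos_iff.mp (by omega)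
  have hset : ∀ x : Fin 3 → D, g x ≠ ⊤ ↔
      (x = ![a,a,a] ∨ x = ![a,b,b] ∨ x = ![b,a,b] ∨ x = ![b,b,a]) := by
    intro x
    have := Set.ext_iff.mp hfin x
    simpa [Set.mem_insert_iff] using this
  -- finiteness of the four values
  have haaa : g ![a,a,a] ≠ ⊤ := (hset _).mpr (Or.inl rfl)
  have habb : g ![a,b,b] ≠ ⊤ := (hset _).mpr (Or.inr (Or.inl rfl))
  have hbab : g ![b,a,b] ≠ ⊤ := (hset _).mpr (Or.inr (Or.inr (Or.inl rfl)))
  have hbba : g ![b,b,a] ≠ ⊤ := (hset _).mpr (Or.inr (Or.inr (Or.inr rfl)))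
  set C : ℝ≥0∞ := g ![a,b,b] + g ![b,a,b] + 1 with hC
  have hCne : C ≠ ⊤ := by
    simp [hC, ENNReal.add_eq_top, habb, hbab]
  set u : D → ℝ≥0∞ := fun c => if c = a then C else 0 with hu
  set f : (Fin 2 → D) → ℝ≥0∞ := fun z : Fin 2 → D => ⨅ c : D, u c + g ![z 0, z 1, c] with hf
  have hfc : InVClone Φ f := inVClone_comp Φ hcons g hg u
  -- vanishing of g off the four points
  have hatop : ∀ c, c ≠ a → g ![a,a,c] = ⊤ := by
    intro c hc
    by_contra h
    rcases (hset _).mp h with h | h | h | h <;>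
      · obtain ⟨h1, h2, h3⟩ := vec3_ext h
        first | exact hc h3 | exact hab h1 | exact hab h2
  have hbtop : ∀ c, c ≠ a → g ![b,b,c] = ⊤ := by
    intro c hc
    by_contra h
    rcases (hset _).mp h with h | h | h | h <;>
      · obtain ⟨h1, h2, h3⟩ := vec3_ext h
        first | exact hab h1.symm | exact hab h2.symm | exact hc h3
  have habtop : ∀ c, c ≠ b → g ![a,b,c] = ⊤ := by
    intro c hc
    by_contra h
    rcases (hset _).mp h with h | h | h | h <;>
      · obtain ⟨h1, h2, h3⟩ := vec3_ext h
        first | exact hab h2.symm | exact hc h3 | exact hab h1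
  have hbatop : ∀ c, c ≠ b → g ![b,a,c] = ⊤ := by
    intro c hc
    by_contra h
    rcases (hset _).mp h with h | h | h | h <;>
      · obtain ⟨h1, h2, h3⟩ := vec3_ext h
        first | exact hab h1.symm | exact hab h2 | exact hc h3
  -- compute the four values of f
  have hfaa : f ![a,a] = C + g ![a,a,a] := by
    rw [hf]
    show (⨅ c : D, u c + g ![(![a,a]) 0, (![a,a]) 1, c]) = _
    simp only [Matrix.cons_val_zero, Matrix.cons_val_one, Matrix.head_cons]
    rw [iInf_eq_of_top a (fun c hc => by rw [hatop c hc]; simp)]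
    simp [hu]
  have hfbb : f ![b,b] = C + g ![b,b,a] := by
    rw [hf]
    show (⨅ c : D, u c + g ![(![b,b]) 0, (![b,b]) 1, c]) = _
    simp only [Matrix.cons_val_zero, Matrix.cons_val_one, Matrix.head_cons]
    rw [iInf_eq_of_top a (fun c hc => by rw [hbtop c hc]; simp)]
    simp [hu]
  have hfab : f ![a,b] = g ![a,b,b] := by
    rw [hf]
    show (⨅ c : D, u c + g ![(![a,b]) 0, (![a,b]) 1, c]) = _
    simp only [Matrix.cons_val_zero, Matrix.cons_val_one, Matrix.head_cons]
    rw [iInf_eq_of_top b (fun c hc => by rw [habtop c hc]; simp)]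
    simp [hu, hab.symm]
  have hfba : f ![b,a] = g ![b,a,b] := by
    rw [hf]
    show (⨅ c : D, u c + g ![(![b,a]) 0, (![b,a]) 1, c]) = _
    simp only [Matrix.cons_val_zero, Matrix.cons_val_one, Matrix.head_cons]
    rw [iInf_eq_of_top b (fun c hc => by rw [hbatop c hc]; simp)]
    simp [hu, hab.symm]
  intro hws
  rcases hws f hfc a b with h | ⟨h1, _⟩
  · rw [hfaa, hfbb, hfab, hfba] at h
    have hlt : g ![a,b,b] + g ![b,a,b] < C := by
      rw [hC]
      exact ENNReal.lt_add_right (by simp [ENNReal.add_eq_top, habb, hbab]) one_ne_zero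
    have hle : C ≤ C + g ![a,a,a] + (C + g ![b,b,a]) := le_add_right (le_add_right le_rfl)
    exact absurd (le_trans hle h) (not_le.mpr hlt)
  · rw [hfaa] at h1
    exact absurd h1 (by simp [ENNReal.add_eq_top, hCne, haaa])
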